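/- (Broadcast compatibility equals the state marginal problem for Choi states) Let s, A, B be nonempty finite types, 𝓔₁ a quantum channel from s to A, and 𝓔₂ a quantum channel from s to B. There exists a quantum channel 𝓔 from s to A × B such that for every quantum state ρ on s, the partial trace of 𝓔 ρ over B equals 𝓔₁ ρ and the partial trace of 𝓔 ρ over A equals 𝓔₂ ρ, if and only if there exists a positive semidefinite matrix σ indexed by (A × B) × s such that, after canonical reindexing, the partial trace of σ over the factor B equals J(𝓔₁) and the partial trace of σ over the factor A equals J(𝓔₂). -/

import Mathlib

open Matrix Kronecker
open scoped ComplexOrder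

noncomputable section

/-- A quantum state: positive semidefinite with unit trace. -/
def IsState {n : Type*} [Fintype n] (ρ : Matrix n n ℂ) : Prop :=
  ρ.PosSemidef ∧ ρ.trace = 1

/-- The Choi matrix of a linear map on matrices. -/
def choi {n m : Type*} [Fintype n] [DecidableEq n]
    (𝓔 : Matrix n n ℂ →ₗ[ℂ] Matrix m m ℂ) : Matrix (m × n) (m × n) ℂ :=
  Matrix.of fun p q =>
    (1 / (Fintype.card n : ℂ)) * 𝓔 (Matrix.single p.2 q.2 1) p.1 q.1

/-- A quantum channel: trace preserving and completely positive. -/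
def IsChannel {n m : Type*} [Fintype n] [DecidableEq n] [Fintype m]
    (𝓔 : Matrix n n ℂ →ₗ[ℂ] Matrix m m ℂ) : Prop :=
  (∀ ρ : Matrix n n ℂ, (𝓔 ρ).trace = ρ.trace) ∧ (choi 𝓔).PosSemidef

/-- Partial trace over the second (right) factor. -/
def trR {a b : Type*} [Fintype b] (M : Matrix (a × b) (a × b) ℂ) : Matrix a a ℂ :=
  Matrix.of fun i j => ∑ k, M (i, k) (j, k)

/-- Partial trace over the first (left) factor. -/
def trL {a b : Type*} [Fintype a] (M : Matrix (a × b) (a × b) ℂ) : Matrix b b ℂ :=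
  Matrix.of fun i j => ∑ k, M (k, i) (k, j)

/-- Partial trace over the third factor of a triple product. -/
def trC3 {a b c : Type*} [Fintype c] (M : Matrix (a × b × c) (a × b × c) ℂ) :
    Matrix (a × b) (a × b) ℂ :=
  Matrix.of fun i j => ∑ k, M (i.1, i.2, k) (j.1, j.2, k)

/-! ### Auxiliary lemmas -/

section Aux

lemma outer_psd {n : Type*} [Fintype n] (c : ℝ) (hc : 0 ≤ c) (w : n → ℂ) :
    (Matrix.of fun i j => (c : ℂ) * (w i * (starRingEnd ℂ) (w j))).PosSemidef := by
  apply Matrix.PosSemidef.of_dotProduct_mulVec_nonneg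
  · ext i j
    simp [Matrix.conjTranspose_apply, mul_comm]
  · intro x
    have : (star x) ⬝ᵥ ((Matrix.of fun i j => (c : ℂ) * (w i * (starRingEnd ℂ) (w j))) *ᵥ x)
        = (c : ℂ) * ((starRingEnd ℂ) (∑ j, (starRingEnd ℂ) (w j) * x j) *
            (∑ j, (starRingEnd ℂ) (w j) * x j)) := by
      simp [Matrix.mulVec, dotProduct, Finset.mul_sum, Finset.sum_mul, map_sum]
      rw [Finset.sum_comm]
      congr 1; ext i; congr 1; ext j; ring
    rw [this]
    set z := ∑ j, (starRingEnd ℂ) (w j) * x j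
    rw [Complex.conj_mul', ← Complex.ofReal_pow, ← Complex.ofReal_mul, Complex.zero_le_real]
    positivity

lemma outer_trace {n : Type*} [Fintype n] (c : ℝ) (w : n → ℂ) :
    (Matrix.of fun i j => (c : ℂ) * (w i * (starRingEnd ℂ) (w j))).trace
      = (c : ℂ) * ∑ i, (Complex.normSq (w i) : ℂ) := by
  simp [Matrix.trace, Matrix.diag, Complex.mul_conj, Finset.mul_sum]

lemma map_eq_sum {n m : Type*} [Fintype n] [DecidableEq n]
    (T : Matrix n n ℂ →ₗ[ℂ] Matrix m m ℂ) (M : Matrix n n ℂ) :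
    T M = ∑ k, ∑ l, M k l • T (Matrix.single k l 1) := by
  conv_lhs => rw [Matrix.matrix_eq_sum_single M]
  rw [map_sum]
  refine Finset.sum_congr rfl fun k _ => ?_
  rw [map_sum]
  refine Finset.sum_congr rfl fun l _ => ?_
  rw [← LinearMap.map_smul, Matrix.smul_single, smul_eq_mul, mul_one]

lemma stdBasis_diag_state {n : Type*} [Fintype n] [DecidableEq n] (k : n) :
    IsState (Matrix.single k k (1 : ℂ)) := by
  have h : Matrix.single k k (1 : ℂ)
      = Matrix.of fun i j => ((1 : ℝ) : ℂ) * ((Pi.single k 1 : n → ℂ) i *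
          (starRingEnd ℂ) ((Pi.single k 1 : n → ℂ) j)) := by
    ext i j
    by_cases hik : i = k <;> by_cases hjk : j = k <;>
      subst_vars <;> simp_all [Matrix.single, Pi.single_apply, eq_comm]
  constructor
  · rw [h]; exact outer_psd 1 zero_le_one _
  · rw [h, outer_trace]
    simp [Pi.single_apply, apply_ite Complex.normSq, apply_ite (Complex.ofReal)]

lemma vanish_stdBasis {n m : Type*} [Fintype n] [DecidableEq n]
    (T : Matrix n n ℂ →ₗ[ℂ] Matrix m m ℂ)
    (hT : ∀ ρ, IsState ρ → T ρ = 0) (k l : n) :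
    T (Matrix.single k l 1) = 0 := by
  rcases eq_or_ne k l with rfl | hkl
  · exact hT _ (stdBasis_diag_state k)
  set v : n → ℂ := Pi.single k 1 + Pi.single l 1 with hv
  set w : n → ℂ := Pi.single k 1 + Pi.single l Complex.I with hw
  set P3 : Matrix n n ℂ :=
    Matrix.of fun i j => ((1/2 : ℝ) : ℂ) * (v i * (starRingEnd ℂ) (v j)) with hP3
  set P4 : Matrix n n ℂ :=
    Matrix.of fun i j => ((1/2 : ℝ) : ℂ) * (w i * (starRingEnd ℂ) (w j)) with hP4
  have hsplit : ∀ x, ((if x = k then (1:ℝ) else if x = l then 1 else 0 : ℝ) : ℂ)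
      = (if x = k then 1 else 0) + (if x = l then 1 else 0) := by
    intro x; split_ifs <;> simp_all
  have hS3 : IsState P3 := by
    constructor
    · exact outer_psd _ (by norm_num) _
    · rw [hP3, outer_trace]
      have h1 : ∀ i, Complex.normSq (v i) = if i = k then 1 else if i = l then 1 else 0 := by
        intro i
        simp only [hv, Pi.add_apply, Pi.single_apply]
        split_ifs <;> simp_all
      simp only [h1, hsplit, Finset.sum_add_distrib, Finset.sum_ite_eq', Finset.mem_univ,
        if_true]
      norm_num
  have hS4 : IsState P4 := by
    constructor
    · exact outer_psd _ (by norm_num) _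
    · rw [hP4, outer_trace]
      have h1 : ∀ i, Complex.normSq (w i) = if i = k then 1 else if i = l then 1 else 0 := by
        intro i
        simp only [hw, Pi.add_apply, Pi.single_apply]
        split_ifs <;> simp_all [Complex.normSq_I]
      simp only [h1, hsplit, Finset.sum_add_distrib, Finset.sum_ite_eq', Finset.mem_univ,
        if_true]
      norm_num
  have hdecomp : Matrix.single k l (1:ℂ)
      = P3 + Complex.I • P4
        - ((1 + Complex.I)/2) • (Matrix.single k k (1:ℂ)
            + Matrix.single l l (1:ℂ)) := by
    ext i j
    have hkl' : ¬ (l = k) := fun h => hkl h.symm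
    simp only [hP3, hP4, hv, hw, Matrix.sub_apply, Matrix.add_apply, Matrix.smul_apply,
      Matrix.of_apply, Pi.add_apply, Pi.single_apply, Matrix.single, smul_eq_mul]
    by_cases hik : i = k <;> by_cases hil : i = l <;>
      by_cases hjk : j = k <;> by_cases hjl : j = l <;> subst_vars <;>
      clear hv hw hP3 hP4 <;> simp_all [Complex.conj_I, eq_comm] <;> ring_nf <;> simp [Complex.I_sq] <;> ring
  rw [hdecomp]
  simp only [map_sub, map_add, LinearMap.map_smul]
  rw [hT _ hS3, hT _ hS4, hT _ (stdBasis_diag_state k), hT _ (stdBasis_diag_state l)]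
  simp

lemma vanish_on_states {n m : Type*} [Fintype n] [DecidableEq n]
    (T : Matrix n n ℂ →ₗ[ℂ] Matrix m m ℂ)
    (hT : ∀ ρ, IsState ρ → T ρ = 0) (M : Matrix n n ℂ) : T M = 0 := by
  rw [map_eq_sum, Finset.sum_eq_zero]
  intro k _
  rw [Finset.sum_eq_zero]
  intro l _
  rw [vanish_stdBasis T hT, smul_zero]

/-- `trR` as a linear map. -/
def trRlin {a b : Type*} [Fintype b] : Matrix (a × b) (a × b) ℂ →ₗ[ℂ] Matrix a a ℂ where
  toFun := trR
  map_add' M N := by ext i j; simp [trR, Finset.sum_add_distrib]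
  map_smul' c M := by ext i j; simp [trR, Finset.mul_sum]

/-- `trL` as a linear map. -/
def trLlin {a b : Type*} [Fintype a] : Matrix (a × b) (a × b) ℂ →ₗ[ℂ] Matrix b b ℂ where
  toFun := trL
  map_add' M N := by ext i j; simp [trL, Finset.sum_add_distrib]
  map_smul' c M := by ext i j; simp [trL, Finset.mul_sum]

/-- The channel associated with a Choi-type matrix. -/
def chanOf {n m : Type*} [Fintype n] [Fintype m] (σ : Matrix (m × n) (m × n) ℂ) :
    Matrix n n ℂ →ₗ[ℂ] Matrix m m ℂ where
  toFun M := Matrix.of fun i j =>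
    (Fintype.card n : ℂ) * ∑ k, ∑ l, M k l * σ (i, k) (j, l)
  map_add' M N := by
    ext i j
    simp only [Matrix.of_apply, Matrix.add_apply, add_mul, Finset.sum_add_distrib, mul_add]
  map_smul' c M := by
    ext i j
    simp only [Matrix.of_apply, Matrix.smul_apply, smul_eq_mul, RingHom.id_apply,
      Finset.mul_sum]
    refine Finset.sum_congr rfl fun k _ => Finset.sum_congr rfl fun l _ => by ring

lemma sum_rearrange {ι n : Type*} [Fintype ι] [Fintype n]
    (c : ℂ) (ρ : Matrix n n ℂ) (f : ι → n → n → ℂ) :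
    ∑ i : ι, c * ∑ k, ∑ l, ρ k l * f i k l
      = ∑ k, ∑ l, ρ k l * (c * ∑ i, f i k l) := by
  simp only [Finset.mul_sum]
  rw [Finset.sum_comm]
  refine Finset.sum_congr rfl fun k _ => ?_
  rw [Finset.sum_comm]
  exact Finset.sum_congr rfl fun l _ => Finset.sum_congr rfl fun i _ => by ring

lemma choi_chanOf {n m : Type*} [Fintype n] [DecidableEq n] [Nonempty n] [Fintype m]
    (σ : Matrix (m × n) (m × n) ℂ) : choi (chanOf σ) = σ := by
  have hcs : (Fintype.card n : ℂ) ≠ 0 := Nat.cast_ne_zero.mpr Fintype.card_ne_zero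
  ext ⟨i, k⟩ ⟨j, l⟩
  simp only [choi, chanOf, Matrix.of_apply, LinearMap.coe_mk, AddHom.coe_mk,
    Matrix.single, ite_mul, one_mul, zero_mul]
  have h1 : ∀ k', (∑ l', if k = k' ∧ l = l' then σ (i, k') (j, l') else 0)
      = if k = k' then σ (i, k') (j, l) else 0 := by
    intro k'
    by_cases h : k = k' <;> simp [h, Finset.sum_ite_eq']
  rw [Finset.sum_congr rfl fun k' _ => h1 k']
  simp [Finset.sum_ite_eq', eq_comm]

end Aux

/-- Broadcast compatibility of two channels with a common input equals the state
marginal problem for their Choi states. -/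
theorem broadcast_compatible_iff_choi_smp
    {s A B : Type*} [Fintype s] [DecidableEq s] [Nonempty s]
    [Fintype A] [DecidableEq A] [Nonempty A] [Fintype B] [DecidableEq B] [Nonempty B]
    (𝓔₁ : Matrix s s ℂ →ₗ[ℂ] Matrix A A ℂ)
    (𝓔₂ : Matrix s s ℂ →ₗ[ℂ] Matrix B B ℂ)
    (h₁ : IsChannel 𝓔₁) (h₂ : IsChannel 𝓔₂) :
    (∃ 𝓔 : Matrix s s ℂ →ₗ[ℂ] Matrix (A × B) (A × B) ℂ, IsChannel 𝓔 ∧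
        ∀ ρ : Matrix s s ℂ, IsState ρ → trR (𝓔 ρ) = 𝓔₁ ρ ∧ trL (𝓔 ρ) = 𝓔₂ ρ) ↔
      ∃ σ : Matrix ((A × B) × s) ((A × B) × s) ℂ, σ.PosSemidef ∧
        (Matrix.of fun i j : A × s => ∑ k, σ ((i.1, k), i.2) ((j.1, k), j.2)) = choi 𝓔₁ ∧
        (Matrix.of fun i j : B × s => ∑ k, σ ((k, i.1), i.2) ((k, j.1), j.2)) = choi 𝓔₂ := by
  have hcs : (Fintype.card s : ℂ) ≠ 0 := Nat.cast_ne_zero.mpr Fintype.card_ne_zero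
  constructor
  · rintro ⟨𝓔, ⟨htp, hcp⟩, hmarg⟩
    -- the marginal conditions extend from states to all matrices by linearity
    have hR : ∀ M, trR (𝓔 M) = 𝓔₁ M := by
      intro M
      have h0 : ∀ ρ, IsState ρ → (trRlin ∘ₗ 𝓔 - 𝓔₁) ρ = 0 := by
        intro ρ hρ
        have := (hmarg ρ hρ).1
        simp only [LinearMap.sub_apply, LinearMap.comp_apply, trRlin, LinearMap.coe_mk,
          AddHom.coe_mk, this, sub_self]
      have := vanish_on_states _ h0 M
      simpa [LinearMap.sub_apply, LinearMap.comp_apply, trRlin, sub_eq_zero] using this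
    have hL : ∀ M, trL (𝓔 M) = 𝓔₂ M := by
      intro M
      have h0 : ∀ ρ, IsState ρ → (trLlin ∘ₗ 𝓔 - 𝓔₂) ρ = 0 := by
        intro ρ hρ
        have := (hmarg ρ hρ).2
        simp only [LinearMap.sub_apply, LinearMap.comp_apply, trLlin, LinearMap.coe_mk,
          AddHom.coe_mk, this, sub_self]
      have := vanish_on_states _ h0 M
      simpa [LinearMap.sub_apply, LinearMap.comp_apply, trLlin, sub_eq_zero] using this
    refine ⟨choi 𝓔, hcp, ?_, ?_⟩
    · ext i j
      have h := congrFun (congrFun (hR (Matrix.single i.2 j.2 1)) i.1) j.1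
      simp only [trR, Matrix.of_apply] at h
      simp only [choi, Matrix.of_apply, ← Finset.mul_sum, h]
    · ext i j
      have h := congrFun (congrFun (hL (Matrix.single i.2 j.2 1)) i.1) j.1
      simp only [trL, Matrix.of_apply] at h
      simp only [choi, Matrix.of_apply, ← Finset.mul_sum, h]
  · rintro ⟨σ, hσ, hA, hB⟩
    refine ⟨chanOf σ, ⟨?_, by rw [choi_chanOf]; exact hσ⟩, ?_⟩
    · -- trace preservation
      intro ρ
      have hmargtr : ∀ k l : s, ∑ i : A × B, σ (i, k) (i, l)
          = (1 / (Fintype.card s : ℂ)) * (if k = l then 1 else 0) := by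
        intro k l
        have h1 : ∀ a : A, ∑ b : B, σ ((a, b), k) ((a, b), l)
            = (1 / (Fintype.card s : ℂ)) * 𝓔₁ (Matrix.single k l 1) a a := by
          intro a
          have := congrFun (congrFun hA (a, k)) (a, l)
          simpa only [choi, Matrix.of_apply] using this
        rw [Fintype.sum_prod_type]
        simp only [h1]
        rw [← Finset.mul_sum]
        congr 1
        have : ∑ a : A, 𝓔₁ (Matrix.single k l 1) a a
            = (𝓔₁ (Matrix.single k l 1)).trace := rfl
        rw [this, h₁.1]
        rcases eq_or_ne k l with rfl | hkl
        · rw [Matrix.trace_single_eq_same]; simp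
        · rw [Matrix.trace_single_eq_of_ne _ _ _ hkl]; simp [hkl]
      show (Matrix.of fun i j => (Fintype.card s : ℂ) *
          ∑ k, ∑ l, ρ k l * σ (i, k) (j, l)).trace = ρ.trace
      have htr : (Matrix.of fun i j : A × B => (Fintype.card s : ℂ) *
          ∑ k, ∑ l, ρ k l * σ (i, k) (j, l)).trace
          = ∑ i : A × B, (Fintype.card s : ℂ) * ∑ k, ∑ l, ρ k l * σ (i, k) (i, l) := rfl
      rw [htr, sum_rearrange]
      have : ∀ k l : s, ρ k l * ((Fintype.card s : ℂ) * ∑ i : A × B, σ (i, k) (i, l))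
          = ρ k l * (if k = l then 1 else 0) := by
        intro k l
        rw [hmargtr]
        congr 1
        field_simp
      simp only [this, mul_ite, mul_one, mul_zero, Finset.sum_ite_eq, Finset.mem_univ, if_true]
      rfl
    · -- marginals
      intro ρ _
      constructor
      · ext i j
        show ∑ b : B, (Fintype.card s : ℂ) * ∑ k, ∑ l, ρ k l * σ ((i, b), k) ((j, b), l)
            = 𝓔₁ ρ i j
        rw [sum_rearrange]
        have h1 : ∀ k l : s, (Fintype.card s : ℂ) * ∑ b : B, σ ((i, b), k) ((j, b), l)
            = 𝓔₁ (Matrix.single k l 1) i j := by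
          intro k l
          have := congrFun (congrFun hA (i, k)) (j, l)
          simp only [choi, Matrix.of_apply] at this
          rw [this]
          field_simp
        simp only [h1]
        rw [map_eq_sum 𝓔₁ ρ]
        simp [Matrix.sum_apply]
      · ext i j
        show ∑ a : A, (Fintype.card s : ℂ) * ∑ k, ∑ l, ρ k l * σ ((a, i), k) ((a, j), l)
            = 𝓔₂ ρ i j
        rw [sum_rearrange]
        have h1 : ∀ k l : s, (Fintype.card s : ℂ) * ∑ a : A, σ ((a, i), k) ((a, j), l)
            = 𝓔₂ (Matrix.single k l 1) i j := by
          intro k l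
          have := congrFun (congrFun hB (i, k)) (j, l)
          simp only [choi, Matrix.of_apply] at this
          rw [this]
          field_simp
        simp only [h1]
        rw [map_eq_sum 𝓔₂ ρ]
        simp [Matrix.sum_apply]
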